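/- Consider the cascaded closed-loop error system of an n-agent leader-follower formation, in which for each agent i ∈ {2,…,n} and j ∈ N_i the error satisfies ẋ̃_{ij} = −A_i(g_i(t)) x̃_{ij} + Σ_{2≤k≤i−1, m∈N_k} B_{km}(t) x̃_{km} with each B_{km}(t) bounded, and suppose that for each i the state-transition matrix of the unforced system ẋ̃ = −A_i(g_i(t)) x̃ decays exponentially with rate greater than b_i > 0. Then the errors of agent 2 decay with rate greater than c_2 = b_2, and for each i ≥ 3 the errors x̃_{ij}(t) of agent i in the cascaded system decay exponentially with rate greater than c_i = (1/2)·min{c_{i−1}, b_i}. In particular, if b_i = b for all i, then the errors of agent i decay with rate greater than b/2^{i−2} for every i ≥ 3 (with rate b for i = 2). -/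

import Mathlib

open Matrix

noncomputable section

/-- Euclidean norm of a finite-dimensional real vector. -/
def euclNorm {ι : Type*} [Fintype ι] (x : ι → ℝ) : ℝ := Real.sqrt (∑ i, x i * x i)

/-- Projector onto the plane orthogonal to the unit vector `y`: `π_y = I₃ - y yᵀ`. -/
def proj (y : Fin 3 → ℝ) : Matrix (Fin 3) (Fin 3) ℝ := 1 - Matrix.vecMulVec y y

section SAux
open Set MeasureTheory intervalIntegral Interval
set_option linter.unusedSectionVars false
set_option maxHeartbeats 1000000

variable {ι : Type*} [Fintype ι] [DecidableEq ι]

def toEucl : (ι → ℝ) →L[ℝ] EuclideanSpace ℝ ι :=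
  ((EuclideanSpace.equiv ι ℝ).symm : (ι → ℝ) ≃L[ℝ] EuclideanSpace ℝ ι).toContinuousLinearMap

lemma euclNorm_eq (x : ι → ℝ) : euclNorm x = ‖toEucl x‖ := by
  simp [euclNorm, toEucl, EuclideanSpace.norm_eq, Real.norm_eq_abs, pow_two, abs_mul_abs_self]

lemma eucl_nonneg (x : ι → ℝ) : 0 ≤ euclNorm x := Real.sqrt_nonneg _

lemma eucl_add_le (x y : ι → ℝ) : euclNorm (x + y) ≤ euclNorm x + euclNorm y := by
  simp only [euclNorm_eq, map_add]; exact norm_add_le _ _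

lemma abs_le_eucl (x : ι → ℝ) (i : ι) : |x i| ≤ euclNorm x := by
  rw [← Real.sqrt_sq_eq_abs, euclNorm, sq]
  exact Real.sqrt_le_sqrt (Finset.single_le_sum (fun j _ => mul_self_nonneg (x j))
    (Finset.mem_univ i))

lemma pi_norm_le_eucl (x : ι → ℝ) : ‖x‖ ≤ euclNorm x := by
  refine (pi_norm_le_iff_of_nonneg (eucl_nonneg x)).2 fun i => ?_
  simpa [Real.norm_eq_abs] using abs_le_eucl x i

lemma eucl_sum_le {α : Type*} (s : Finset α) (v : α → (ι → ℝ)) :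
    euclNorm (∑ a ∈ s, v a) ≤ ∑ a ∈ s, euclNorm (v a) := by
  simp only [euclNorm_eq, map_sum]; exact norm_sum_le _ _

variable {ι : Type*} [Fintype ι] [DecidableEq ι]

/-- matrices to continuous linear maps, as a continuous linear map -/
def mkCLM : Matrix ι ι ℝ →L[ℝ] ((ι → ℝ) →L[ℝ] (ι → ℝ)) :=
  LinearMap.toContinuousLinearMap
    ((LinearMap.toContinuousLinearMap : ((ι → ℝ) →ₗ[ℝ] (ι → ℝ)) ≃ₗ[ℝ] _).toLinearMap ∘ₗ
      (Matrix.toLin' : Matrix ι ι ℝ ≃ₗ[ℝ] _).toLinearMap)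

@[simp] lemma mkCLM_apply (M : Matrix ι ι ℝ) (v : ι → ℝ) : mkCLM M v = M *ᵥ v := by
  simp [mkCLM, Matrix.toLin'_apply]

lemma mkCLM_mul (M N : Matrix ι ι ℝ) : mkCLM (M * N) = (mkCLM M).comp (mkCLM N) := by
  ext v i; simp [← Matrix.mulVec_mulVec]

@[simp] lemma mkCLM_one : mkCLM (1 : Matrix ι ι ℝ) = ContinuousLinearMap.id ℝ _ := by
  ext v i; simp

lemma mkCLM_expand (M : Matrix ι ι ℝ) :
    mkCLM M = ∑ a, ∑ b, M a b • mkCLM (Matrix.single a b 1) := by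
  have h : M = ∑ a, ∑ b, M a b • Matrix.single a b (1 : ℝ) := by
    ext i j
    simp [Matrix.sum_apply, Matrix.single, ite_and, Finset.sum_ite_eq,
      Matrix.smul_apply]
  conv_lhs => rw [h]
  simp only [map_sum, _root_.map_smul]

/-- assemble an operator-valued derivative from vector-valued derivatives -/
lemma hasDerivAt_mkCLM (P : ℝ → Matrix ι ι ℝ) (D : Matrix ι ι ℝ) (t : ℝ)
    (h : ∀ z : ι → ℝ, HasDerivAt (fun τ => (P τ) *ᵥ z) (D *ᵥ z) t) :
    HasDerivAt (fun τ => mkCLM (P τ)) (mkCLM D) t := by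
  have key : ∀ a b : ι, HasDerivAt (fun τ => P τ a b) (D a b) t := by
    intro a b
    have h1 := (hasDerivAt_pi.1 (h (Pi.single b 1))) a
    simpa [Matrix.mulVec_single] using h1
  have : (fun τ => mkCLM (P τ)) =
      fun τ => ∑ a, ∑ b, P τ a b • mkCLM (Matrix.single a b 1) := by
    funext τ; exact mkCLM_expand (P τ)
  rw [this, mkCLM_expand D]
  refine HasDerivAt.fun_sum fun a _ => HasDerivAt.fun_sum fun b _ => ?_
  exact (key a b).smul_const (mkCLM (Matrix.single a b (1:ℝ)))

variable {ι : Type*} [Fintype ι] [DecidableEq ι]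

/-- global uniqueness for globally-Lipschitz ODEs -/
lemma ode_uniq {E : Type*} [NormedAddCommGroup E] [NormedSpace ℝ E]
    {v : ℝ → E → E} {L : NNReal} (hv : ∀ t, LipschitzWith L (v t))
    {u w : ℝ → E} (hu : ∀ t, HasDerivAt u (v t (u t)) t)
    (hw : ∀ t, HasDerivAt w (v t (w t)) t)
    {t₀ : ℝ} (h : u t₀ = w t₀) : ∀ t, u t = w t := by
  intro t
  have ht₀ : t₀ ∈ Ioo (min t₀ t - 1) (max t₀ t + 1) := by
    constructor
    · have := min_le_left t₀ t; linarith
    · have := le_max_left t₀ t; linarith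
  have ht : t ∈ Ioo (min t₀ t - 1) (max t₀ t + 1) := by
    constructor
    · have := min_le_right t₀ t; linarith
    · have := le_max_right t₀ t; linarith
  exact ODE_solution_unique_of_mem_Ioo
    (fun s _ => (hv s).lipschitzOnWith (s := univ)) ht₀
    (fun s _ => ⟨hu s, mem_univ _⟩) (fun s _ => ⟨hw s, mem_univ _⟩) h ht

/-- Lipschitz bound for `y ↦ -(M t *ᵥ y)` given uniform entry bounds. -/
lemma lipschitz_neg_mulVec (M : Matrix ι ι ℝ) (C : ℝ) (hC : 0 ≤ C)
    (hM : ∀ a b, |M a b| ≤ C) :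
    LipschitzWith ((Fintype.card ι * C).toNNReal) (fun y : ι → ℝ => -(M *ᵥ y)) := by
  have key : ∀ y : ι → ℝ, ‖M *ᵥ y‖ ≤ (Fintype.card ι * C) * ‖y‖ := by
    intro y
    have h1 : 0 ≤ (Fintype.card ι * C) * ‖y‖ :=
      mul_nonneg (mul_nonneg (by positivity) hC) (norm_nonneg _)
    refine (pi_norm_le_iff_of_nonneg h1).2 fun a => ?_
    rw [Real.norm_eq_abs]
    calc |(M *ᵥ y) a| = |∑ b, M a b * y b| := rfl
      _ ≤ ∑ b, |M a b * y b| := Finset.abs_sum_le_sum_abs _ _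
      _ ≤ ∑ _b : ι, C * ‖y‖ := by
          refine Finset.sum_le_sum fun b _ => ?_
          rw [abs_mul]
          exact mul_le_mul (hM a b) (norm_le_pi_norm y b) (abs_nonneg _) hC
      _ = (Fintype.card ι * C) * ‖y‖ := by
          simp [Finset.sum_const, mul_assoc]
  refine LipschitzWith.of_dist_le_mul fun y z => ?_
  rw [dist_eq_norm, dist_eq_norm, Real.coe_toNNReal _ (by positivity)]
  have : -(M *ᵥ y) - -(M *ᵥ z) = M *ᵥ (z - y) := by
    rw [Matrix.mulVec_sub]; abel
  calc ‖-(M *ᵥ y) - -(M *ᵥ z)‖ = ‖M *ᵥ (z - y)‖ := by rw [this]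
    _ ≤ (Fintype.card ι * C) * ‖z - y‖ := key _
    _ = (Fintype.card ι * C) * ‖y - z‖ := by rw [norm_sub_rev]


section Decay
variable {ι : Type*} [Fintype ι] [DecidableEq ι]

lemma decay
    (A : ℝ → Matrix ι ι ℝ) (Φ : ℝ → ℝ → Matrix ι ι ℝ)
    (hΦ0 : ∀ s, Φ s s = 1)
    (hΦd : ∀ s t (z : ι → ℝ), HasDerivAt (fun τ => (Φ τ s) *ᵥ z) (-((A t * Φ t s) *ᵥ z)) t)
    (L : NNReal) (hL : ∀ t, LipschitzWith L (fun y : ι → ℝ => -(A t *ᵥ y)))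
    (k b : ℝ) (hb : 0 < b) (hk : 0 ≤ k)
    (hdecay : ∀ s t : ℝ, 0 ≤ s → s ≤ t → ∀ z,
      euclNorm ((Φ t s) *ᵥ z) ≤ k * Real.exp (-b * (t - s)) * euclNorm z)
    (x f : ℝ → ι → ℝ)
    (hx : ∀ t : ℝ, 0 ≤ t → HasDerivAt x (-(A t *ᵥ x t) + f t) t)
    (Mf c' c : ℝ) (hMf : 0 ≤ Mf)
    (hf : ∀ σ : ℝ, 0 ≤ σ → euclNorm (f σ) ≤ Mf * Real.exp (-c' * σ))
    (hc : 0 < c) (hcb : c ≤ b) (hcc : c < c') :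
    ∃ K : ℝ, 0 < K ∧ ∀ t : ℝ, 0 ≤ t → euclNorm (x t) ≤ K * Real.exp (-c * t) := by
  -- flow operators
  set G : ℝ → ((ι → ℝ) →L[ℝ] (ι → ℝ)) := fun τ => mkCLM (Φ τ 0) with hGdef
  set R : ℝ → ((ι → ℝ) →L[ℝ] (ι → ℝ)) := fun τ => mkCLM (Φ 0 τ) with hRdef
  have hGd : ∀ t, HasDerivAt G (mkCLM (-(A t * Φ t 0))) t := by
    intro t
    refine hasDerivAt_mkCLM _ _ t fun z => ?_
    simpa [Matrix.neg_mulVec] using hΦd 0 t z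
  -- vector solutions of the unforced equation
  have sol : ∀ s (z : ι → ℝ) (τ : ℝ),
      HasDerivAt (fun τ => Φ τ s *ᵥ z) (-(A τ *ᵥ (Φ τ s *ᵥ z))) τ := by
    intro s z τ
    simpa [Matrix.mulVec_mulVec] using hΦd s τ z
  -- cocycle property
  have coc : ∀ r s t (z : ι → ℝ), Φ t s *ᵥ (Φ s r *ᵥ z) = Φ t r *ᵥ z := by
    intro r s t z
    have h := ode_uniq hL (sol s (Φ s r *ᵥ z)) (sol r z) (t₀ := s) (by simp [hΦ0])
    exact h t
  have hGR : ∀ s, (G s) * (R s) = 1 := by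
    intro s
    refine ContinuousLinearMap.ext fun z => ?_
    simpa [hGdef, hRdef, hΦ0] using coc s 0 s z
  have hRG : ∀ s, (R s) * (G s) = 1 := by
    intro s
    refine ContinuousLinearMap.ext fun z => ?_
    simpa [hGdef, hRdef, hΦ0] using coc 0 s 0 z
  set u : ℝ → ((ι → ℝ) →L[ℝ] (ι → ℝ))ˣ := fun s => ⟨G s, R s, hGR s, hRG s⟩ with hudef
  have hRinv : ∀ s, Ring.inverse (G s) = R s := fun s => by
    rw [show G s = ((u s : ((ι → ℝ) →L[ℝ] (ι → ℝ))ˣ) : _) from rfl, Ring.inverse_unit]; rfl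
  -- derivative of the inverse flow
  have hRd : ∀ t, HasDerivAt R ((R t) * (mkCLM (A t))) t := by
    intro t
    have h1 := hasFDerivAt_ringInverse (𝕜 := ℝ) (u t)
    have h2 := h1.comp_hasDerivAt t (hGd t)
    have h3 : Ring.inverse ∘ G = R := funext hRinv
    rw [h3] at h2
    refine h2.congr_deriv (Eq.symm ?_)
    have hG' : mkCLM (-(A t * Φ t 0)) = -(mkCLM (A t) * G t) := by
      rw [map_neg, mkCLM_mul]; rfl
    rw [hG']
    simp only [ContinuousLinearMap.neg_apply, ContinuousLinearMap.mulLeftRight_apply]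
    have hinv : ((u t)⁻¹ : ((ι → ℝ) →L[ℝ] (ι → ℝ))ˣ) = (R t : _) := rfl
    rw [hinv]
    refine ContinuousLinearMap.ext fun z => ?_
    have hz : G t (R t z) = z := by simpa [hGdef, hRdef, hΦ0] using coc t 0 t z
    simp only [ContinuousLinearMap.mul_apply, ContinuousLinearMap.neg_apply, map_neg, neg_neg, hz]
  -- the transformed variable w
  set w : ℝ → ι → ℝ := fun τ => R τ (x τ) with hwdef
  have hwd : ∀ τ : ℝ, 0 ≤ τ → HasDerivAt w (R τ (f τ)) τ := by
    intro τ hτ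
    have h := (hRd τ).clm_apply (hx τ hτ)
    have hval : (R τ * mkCLM (A τ)) (x τ) + R τ (-(A τ *ᵥ x τ) + f τ) = R τ (f τ) := by
      simp only [ContinuousLinearMap.mul_apply, map_add, map_neg]
      have : mkCLM (A τ) (x τ) = A τ *ᵥ x τ := mkCLM_apply _ _
      rw [this]; abel
    rw [hval] at h
    exact h
  have hRcont : Continuous R := by
    refine continuous_iff_continuousAt.2 fun τ => (hRd τ).continuousAt
  -- main estimate
  set β : ℝ := c' - c with hβ
  have hβpos : 0 < β := by simp [hβ]; linarith
  refine ⟨k * euclNorm (x 0) + k * Mf / β + 1, ?_, fun t ht => ?_⟩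
  · have h1 := eucl_nonneg (x 0)
    have h2 : 0 ≤ k * Mf / β := by positivity
    nlinarith
  -- integrability of the transformed derivative
  obtain ⟨CR, hCR⟩ := isCompact_Icc.exists_bound_of_continuousOn
    (hRcont.continuousOn : ContinuousOn R (Icc 0 t))
  have hIsub : Ι (0:ℝ) t ⊆ Icc 0 t := by
    rw [uIoc_of_le ht]; exact Ioc_subset_Icc_self
  have hbound : ∀ σ ∈ Ι (0:ℝ) t, ‖R σ (f σ)‖ ≤ CR * Mf := by
    intro σ hσ
    have hσ0 : (0:ℝ) ≤ σ := (hIsub hσ).1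
    have h1 : ‖R σ (f σ)‖ ≤ ‖R σ‖ * ‖f σ‖ := (R σ).le_opNorm _
    have h2 : ‖f σ‖ ≤ Mf := by
      refine (pi_norm_le_eucl (f σ)).trans ((hf σ hσ0).trans ?_)
      have : Real.exp (-c' * σ) ≤ 1 := by
        rw [Real.exp_le_one_iff]
        nlinarith
      nlinarith [Real.exp_pos (-c' * σ)]
    have h3 : ‖R σ‖ ≤ CR := hCR σ (hIsub hσ)
    calc ‖R σ (f σ)‖ ≤ ‖R σ‖ * ‖f σ‖ := h1
      _ ≤ CR * Mf := by
          have := norm_nonneg (R σ)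
          have := norm_nonneg (f σ)
          nlinarith
  have hmeas : AEStronglyMeasurable (fun σ => R σ (f σ))
      (volume.restrict (Ι (0:ℝ) t)) := by
    have hder : ∀ σ ∈ Ι (0:ℝ) t, deriv w σ = R σ (f σ) := fun σ hσ =>
      (hwd σ (hIsub hσ).1).deriv
    refine ((measurable_deriv w).aestronglyMeasurable.restrict).congr ?_
    rw [uIoc_of_le ht]
    exact (ae_restrict_iff' measurableSet_Ioc).2
      (Filter.Eventually.of_forall fun σ hσ => hder σ (by rwa [uIoc_of_le ht]))
  have hint : IntervalIntegrable (fun σ => R σ (f σ)) volume 0 t := by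
    rw [intervalIntegrable_iff]
    haveI : IsFiniteMeasure (volume.restrict (Ι (0:ℝ) t)) := by
      constructor
      rw [Measure.restrict_apply_univ]
      rw [uIoc_of_le ht, Real.volume_Ioc]
      exact ENNReal.ofReal_lt_top
    exact ⟨hmeas, HasFiniteIntegral.of_bounded
      ((ae_restrict_iff' measurableSet_uIoc).2
        (Filter.Eventually.of_forall hbound))⟩
  -- fundamental theorem of calculus
  have hFTC : ∫ σ in (0:ℝ)..t, R σ (f σ) = w t - w 0 := by
    refine integral_eq_sub_of_hasDerivAt (fun σ hσ => ?_) hint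
    rw [uIcc_of_le ht] at hσ
    exact hwd σ hσ.1
  have hw0 : w 0 = x 0 := by
    simp [hwdef, hRdef, hΦ0]
  -- reconstruct x
  have hxt : x t = G t (x 0) + G t (∫ σ in (0:ℝ)..t, R σ (f σ)) := by
    have h1 : G t (w t) = x t := by
      have : G t (R t (x t)) = x t := by
        simpa [hGdef, hRdef, hΦ0] using coc t 0 t (x t)
      simpa [hwdef] using this
    rw [hFTC, map_sub, h1, hw0]
    abel
  -- move G t inside the integral
  have hGint : G t (∫ σ in (0:ℝ)..t, R σ (f σ)) =
      ∫ σ in (0:ℝ)..t, G t (R σ (f σ)) := ((G t).intervalIntegral_comp_comm hint).symm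
  have hintG : IntervalIntegrable (fun σ => G t (R σ (f σ))) volume 0 t := by
    rw [intervalIntegrable_iff] at hint ⊢
    exact (G t).integrable_comp hint
  -- euclidean-norm estimate of the integral term
  have hcocv : ∀ σ : ℝ, G t (R σ (f σ)) = Φ t σ *ᵥ f σ := by
    intro σ
    simpa [hGdef, hRdef] using coc σ 0 t (f σ)
  have hbnd2 : ∀ σ ∈ Ι (0:ℝ) t,
      ‖toEucl (G t (R σ (f σ)))‖ ≤ (k * Mf * Real.exp (-c * t)) * Real.exp (-β * σ) := by
    intro σ hσ
    have hσ' := hIsub hσ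
    have hσ0 : (0:ℝ) ≤ σ := hσ'.1
    have hσt : σ ≤ t := hσ'.2
    rw [← euclNorm_eq, hcocv σ]
    have h1 := hdecay σ t hσ0 hσt (f σ)
    have h2 := hf σ hσ0
    have h3 : Real.exp (-b * (t - σ)) * Real.exp (-c' * σ) ≤
        Real.exp (-c * t) * Real.exp (-β * σ) := by
      rw [← Real.exp_add, ← Real.exp_add, Real.exp_le_exp]
      rw [hβ]
      nlinarith [mul_le_mul_of_nonneg_right hcb (sub_nonneg.2 hσt)]
    calc euclNorm (Φ t σ *ᵥ f σ) ≤ k * Real.exp (-b * (t - σ)) * euclNorm (f σ) := h1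
      _ ≤ k * Real.exp (-b * (t - σ)) * (Mf * Real.exp (-c' * σ)) :=
          mul_le_mul_of_nonneg_left h2 (mul_nonneg hk (Real.exp_pos _).le)
      _ = (k * Mf) * (Real.exp (-b * (t - σ)) * Real.exp (-c' * σ)) := by ring
      _ ≤ (k * Mf) * (Real.exp (-c * t) * Real.exp (-β * σ)) :=
          mul_le_mul_of_nonneg_left h3 (mul_nonneg hk hMf)
      _ = (k * Mf * Real.exp (-c * t)) * Real.exp (-β * σ) := by ring
  -- integral of the exponential bound
  have hexpint : ∀ β' : ℝ, 0 < β' → ∫ σ in (0:ℝ)..t, Real.exp (-β' * σ) ≤ 1 / β' := by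
    intro β' hβ'
    have hder : ∀ σ ∈ uIcc (0:ℝ) t,
        HasDerivAt (fun σ => -Real.exp (-β' * σ) / β') (Real.exp (-β' * σ)) σ := by
      intro σ _
      have h1 : HasDerivAt (fun σ : ℝ => -β' * σ) (-β') σ := by
        simpa using (hasDerivAt_id σ).const_mul (-β')
      have h2 := (Real.hasDerivAt_exp (-β' * σ)).comp σ h1
      have h3 := (h2.div_const β').neg
      have hne : β' ≠ 0 := ne_of_gt hβ'
      have hfun : (fun σ : ℝ => -Real.exp (-β' * σ) / β')
          = (fun σ : ℝ => -(Real.exp (-β' * σ) / β')) := by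
        funext τ; ring
      have hval : -(Real.exp (-β' * σ) * -β' / β') = Real.exp (-β' * σ) := by
        field_simp
      rw [hfun, ← hval]
      exact h3
    have hii : IntervalIntegrable (fun σ => Real.exp (-β' * σ)) volume 0 t :=
      (Real.continuous_exp.comp (continuous_const.mul continuous_id)).intervalIntegrable 0 t
    have heq := integral_eq_sub_of_hasDerivAt hder hii
    rw [heq]
    have h4 : Real.exp (-β' * 0) = 1 := by norm_num
    have h5 : 0 < Real.exp (-β' * t) := Real.exp_pos _
    rw [h4, ← sub_div, div_le_div_iff_of_pos_right hβ']
    nlinarith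
  -- put everything together
  have hterm1 : euclNorm (G t (x 0)) ≤ k * euclNorm (x 0) * Real.exp (-c * t) := by
    have h1 : G t (x 0) = Φ t 0 *ᵥ x 0 := by simp [hGdef]
    rw [h1]
    have h2 := hdecay 0 t le_rfl ht (x 0)
    have h3 : Real.exp (-b * (t - 0)) ≤ Real.exp (-c * t) := by
      rw [Real.exp_le_exp]; nlinarith
    have h5 := mul_le_mul_of_nonneg_left h3 (mul_nonneg hk (eucl_nonneg (x 0)))
    calc euclNorm (Φ t 0 *ᵥ x 0) ≤ k * Real.exp (-b * (t - 0)) * euclNorm (x 0) := h2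
      _ = (k * euclNorm (x 0)) * Real.exp (-b * (t - 0)) := by ring
      _ ≤ (k * euclNorm (x 0)) * Real.exp (-c * t) := h5
      _ = k * euclNorm (x 0) * Real.exp (-c * t) := by ring
  have hterm2 : euclNorm (G t (∫ σ in (0:ℝ)..t, R σ (f σ))) ≤
      (k * Mf / β) * Real.exp (-c * t) := by
    rw [hGint, euclNorm_eq]
    have hJcomm : toEucl (∫ σ in (0:ℝ)..t, G t (R σ (f σ))) =
        ∫ σ in (0:ℝ)..t, toEucl (G t (R σ (f σ))) := (toEucl.intervalIntegral_comp_comm hintG).symm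
    rw [hJcomm]
    have hgii : IntervalIntegrable
        (fun σ => (k * Mf * Real.exp (-c * t)) * Real.exp (-β * σ)) volume 0 t :=
      (continuous_const.mul
        (Real.continuous_exp.comp (continuous_const.mul continuous_id))).intervalIntegrable 0 t
    have h1 := intervalIntegral.norm_integral_le_of_norm_le
      (μ := volume) (a := (0:ℝ)) (b := t) ht
      (Filter.Eventually.of_forall fun σ hσ => hbnd2 σ (by rwa [uIoc_of_le ht])) hgii
    refine h1.trans ?_
    have h2 : ∫ σ in (0:ℝ)..t, (k * Mf * Real.exp (-c * t)) * Real.exp (-β * σ) =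
        (k * Mf * Real.exp (-c * t)) * ∫ σ in (0:ℝ)..t, Real.exp (-β * σ) := by
      rw [intervalIntegral.integral_const_mul]
    rw [h2]
    have h3 := hexpint β hβpos
    have h4 : 0 ≤ ∫ σ in (0:ℝ)..t, Real.exp (-β * σ) := by
      apply intervalIntegral.integral_nonneg ht
      intro σ _; positivity
    have h5 : 0 ≤ k * Mf * Real.exp (-c * t) := by positivity
    calc (k * Mf * Real.exp (-c * t)) * ∫ σ in (0:ℝ)..t, Real.exp (-β * σ)
        ≤ (k * Mf * Real.exp (-c * t)) * (1 / β) := by nlinarith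
      _ = (k * Mf / β) * Real.exp (-c * t) := by ring
  rw [hxt]
  calc euclNorm (G t (x 0) + G t (∫ σ in (0:ℝ)..t, R σ (f σ)))
      ≤ euclNorm (G t (x 0)) + euclNorm (G t (∫ σ in (0:ℝ)..t, R σ (f σ))) :=
        eucl_add_le _ _
    _ ≤ k * euclNorm (x 0) * Real.exp (-c * t) + (k * Mf / β) * Real.exp (-c * t) := by
        exact add_le_add hterm1 hterm2
    _ ≤ (k * euclNorm (x 0) + k * Mf / β + 1) * Real.exp (-c * t) := by
        nlinarith [Real.exp_pos (-c * t)]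

end Decay

omit [DecidableEq ι] in
lemma euclNorm_zero : euclNorm (0 : ι → ℝ) = 0 := by simp [euclNorm]

lemma proj_entry_bound (y : Fin 3 → ℝ) (hy : y ⬝ᵥ y = 1) (a b : Fin 3) :
    |proj y a b| ≤ 2 := by
  have h1 : ∀ c : Fin 3, |y c| ≤ 1 := by
    intro c
    have h2 : y c * y c ≤ 1 := by
      rw [← hy]
      exact Finset.single_le_sum (f := fun j => y j * y j)
        (fun j _ => mul_self_nonneg (y j)) (Finset.mem_univ c)
    nlinarith [abs_nonneg (y c), abs_mul_abs_self (y c)]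
  have h3 : proj y a b = (1 : Matrix (Fin 3) (Fin 3) ℝ) a b - y a * y b := by
    simp [proj, Matrix.vecMulVec_apply, Matrix.sub_apply]
  rw [h3]
  have h4 : |(1 : Matrix (Fin 3) (Fin 3) ℝ) a b| ≤ 1 := by
    rw [Matrix.one_apply]; split_ifs <;> simp
  have h5 : |y a * y b| ≤ 1 := by
    rw [abs_mul]
    exact mul_le_one₀ (h1 a) (abs_nonneg _) (h1 b)
  calc |(1 : Matrix (Fin 3) (Fin 3) ℝ) a b - y a * y b|
      ≤ |(1 : Matrix (Fin 3) (Fin 3) ℝ) a b| + |y a * y b| := abs_sub _ _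
    _ ≤ 2 := by linarith

/-- the recursively defined sequence of rates -/
def cfun (b : ℕ → ℝ) : ℕ → ℝ
  | 0 => b 2
  | 1 => b 2
  | 2 => b 2
  | (i + 3) => min (cfun b (i + 2)) (b (i + 3)) / 2

lemma cfun_two (b : ℕ → ℝ) : cfun b 2 = b 2 := rfl

lemma cfun_rec (b : ℕ → ℝ) : ∀ i : ℕ, 3 ≤ i → cfun b i = min (cfun b (i - 1)) (b i) / 2 := by
  intro i hi
  obtain ⟨m, rfl⟩ : ∃ m, i = m + 3 := ⟨i - 3, by omega⟩
  have h1 : m + 3 - 1 = m + 2 := by omega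
  rw [h1]
  rfl

end SAux

set_option maxHeartbeats 2000000 in
theorem stmt9
    (n : ℕ) (hn : 2 ≤ n) (N : ℕ → Finset ℕ)
    (hN1 : N 1 = ∅) (hN2 : N 2 = {1})
    (hN : ∀ i : ℕ, 3 ≤ i → i ≤ n → (N i).Nonempty ∧ N i ⊆ Finset.Ico 1 i)
    (kp kd : ℕ → ℝ) (g : ℕ → ℕ → ℝ → (Fin 3 → ℝ))
    (hg : ∀ i : ℕ, 2 ≤ i → i ≤ n → ∀ l ∈ N i, ∀ t : ℝ, g i l t ⬝ᵥ g i l t = 1)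
    (A : ℕ → ℝ → Matrix (Fin 3 ⊕ Fin 3) (Fin 3 ⊕ Fin 3) ℝ)
    (hA : ∀ i : ℕ, ∀ t : ℝ, A i t =
      Matrix.fromBlocks 0 (-1)
        ((kp i) • ∑ l ∈ N i, proj (g i l t)) ((kd i * ((N i).card : ℝ)) • 1))
    -- transition matrices of the unforced systems and their exponential decay rates b_i
    (Φ : ℕ → ℝ → ℝ → Matrix (Fin 3 ⊕ Fin 3) (Fin 3 ⊕ Fin 3) ℝ)
    (hΦ0 : ∀ i s, Φ i s s = 1)
    (hΦ : ∀ i : ℕ, ∀ s t : ℝ, ∀ z : Fin 3 ⊕ Fin 3 → ℝ,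
      HasDerivAt (fun τ => (Φ i τ s).mulVec z) (-((A i t) * Φ i t s).mulVec z) t)
    (kΦ b : ℕ → ℝ) (hkΦ : ∀ i, 0 < kΦ i) (hb : ∀ i, 0 < b i)
    (hΦdecay : ∀ i : ℕ, 2 ≤ i → i ≤ n → ∀ s t : ℝ, 0 ≤ s → s ≤ t →
      ∀ z : Fin 3 ⊕ Fin 3 → ℝ,
        euclNorm ((Φ i t s).mulVec z) ≤ kΦ i * Real.exp (-(b i) * (t - s)) * euclNorm z)
    -- cascaded error dynamics with bounded interconnection terms B_km
    (xt : ℕ → ℕ → ℝ → (Fin 3 ⊕ Fin 3 → ℝ))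
    (B : ℕ → ℕ → ℕ → ℕ → ℝ → Matrix (Fin 3 ⊕ Fin 3) (Fin 3 ⊕ Fin 3) ℝ)
    (hB : ∃ MB : ℝ, ∀ i j k m : ℕ, ∀ t : ℝ, 0 ≤ t → ∀ z : Fin 3 ⊕ Fin 3 → ℝ,
      euclNorm ((B i j k m t).mulVec z) ≤ MB * euclNorm z)
    (hode : ∀ i : ℕ, 2 ≤ i → i ≤ n → ∀ j ∈ N i, ∀ t : ℝ, 0 ≤ t →
      HasDerivAt (xt i j)
        (-(A i t).mulVec (xt i j t) +
          ∑ k ∈ Finset.Ico 2 i, ∑ m ∈ N k, (B i j k m t).mulVec (xt k m t)) t) :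
    -- conclusion: rates c₂ = b₂ and c_i = min{c_{i−1}, b_i}/2 for i ≥ 3
    (∀ c : ℕ → ℝ, c 2 = b 2 → (∀ i : ℕ, 3 ≤ i → c i = min (c (i - 1)) (b i) / 2) →
      ∀ i : ℕ, 2 ≤ i → i ≤ n → ∀ j ∈ N i, ∃ K : ℝ, 0 < K ∧
        ∀ t : ℝ, 0 ≤ t → euclNorm (xt i j t) ≤ K * Real.exp (-(c i) * t)) ∧
    -- particular case: if b_i = b for all i, agent i ≥ 3 decays with rate b/2^{i−2}
    (∀ bc : ℝ, (∀ i : ℕ, 2 ≤ i → i ≤ n → b i = bc) →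
      ∀ i : ℕ, 3 ≤ i → i ≤ n → ∀ j ∈ N i, ∃ K : ℝ, 0 < K ∧
        ∀ t : ℝ, 0 ≤ t →
          euclNorm (xt i j t) ≤ K * Real.exp (-(bc / 2 ^ (i - 2)) * t)) := by
  classical
  obtain ⟨MB, hMB⟩ := hB
  have hMB0 : 0 ≤ MB := by
    have h1 := hMB 0 0 0 0 0 le_rfl (Pi.single (Sum.inl 0) 1)
    have h2 : euclNorm (Pi.single (Sum.inl (0 : Fin 3)) (1:ℝ) : Fin 3 ⊕ Fin 3 → ℝ) = 1 := by
      simp [euclNorm, Pi.single_apply]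
    rw [h2, mul_one] at h1
    exact le_trans (eucl_nonneg _) h1
  -- uniform Lipschitz fields for each agent
  have hLip : ∀ i : ℕ, 2 ≤ i → i ≤ n → ∃ L : NNReal,
      ∀ t : ℝ, LipschitzWith L (fun y : Fin 3 ⊕ Fin 3 → ℝ => -(A i t *ᵥ y)) := by
    intro i hi2 hin
    set Ei : ℝ := 1 + |kp i| * (2 * ((N i).card : ℝ)) + |kd i| * ((N i).card : ℝ) with hEi
    have hEnn : 0 ≤ Ei := by positivity
    have hAb : ∀ t (a b' : Fin 3 ⊕ Fin 3), |A i t a b'| ≤ Ei := by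
      intro t a b'
      rw [hA i t]
      have hcard : (0:ℝ) ≤ ((N i).card : ℝ) := Nat.cast_nonneg _
      rcases a with a | a <;> rcases b' with b' | b'
      · rw [Matrix.fromBlocks_apply₁₁]
        simp only [Matrix.zero_apply, abs_zero]
        positivity
      · rw [Matrix.fromBlocks_apply₁₂]
        have : (-1 : Matrix (Fin 3) (Fin 3) ℝ) a b' = -((1 : Matrix (Fin 3) (Fin 3) ℝ) a b') :=
          rfl
        rw [this, abs_neg, Matrix.one_apply]
        have h2 : 0 ≤ |kp i| * (2 * ((N i).card : ℝ)) := by positivity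
        have h3 : 0 ≤ |kd i| * ((N i).card : ℝ) := by positivity
        split_ifs <;> simp [hEi] <;> nlinarith
      · rw [Matrix.fromBlocks_apply₂₁, Matrix.smul_apply, Matrix.sum_apply]
        rw [smul_eq_mul, abs_mul]
        have h1 : |∑ l ∈ N i, proj (g i l t) a b'| ≤ 2 * ((N i).card : ℝ) := by
          calc |∑ l ∈ N i, proj (g i l t) a b'| ≤ ∑ l ∈ N i, |proj (g i l t) a b'| :=
              Finset.abs_sum_le_sum_abs _ _
            _ ≤ ∑ _l ∈ N i, (2:ℝ) := by
                refine Finset.sum_le_sum fun l hl => ?_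
                exact proj_entry_bound _ (hg i hi2 hin l hl t) a b'
            _ = 2 * ((N i).card : ℝ) := by
                rw [Finset.sum_const, nsmul_eq_mul]; ring
        have h2 : |kp i| * |∑ l ∈ N i, proj (g i l t) a b'| ≤
            |kp i| * (2 * ((N i).card : ℝ)) :=
          mul_le_mul_of_nonneg_left h1 (abs_nonneg _)
        have h3 : 0 ≤ |kd i| * ((N i).card : ℝ) := by positivity
        rw [hEi]; linarith
      · rw [Matrix.fromBlocks_apply₂₂, Matrix.smul_apply, Matrix.one_apply]
        have h2 : 0 ≤ |kp i| * (2 * ((N i).card : ℝ)) := by positivity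
        have h4 : |kd i * ((N i).card : ℝ)| = |kd i| * ((N i).card : ℝ) := by
          rw [abs_mul, Nat.abs_cast]
        have h5 : (0:ℝ) ≤ |kd i| * ((N i).card : ℝ) := by positivity
        split_ifs
        · rw [smul_eq_mul, mul_one, h4, hEi]; linarith
        · rw [smul_eq_mul, mul_zero, abs_zero, hEi]; positivity
    exact ⟨((Fintype.card (Fin 3 ⊕ Fin 3) : ℝ) * Ei).toNNReal,
      fun t => lipschitz_neg_mulVec (A i t) Ei hEnn (hAb t)⟩
  -- Part 1
  have part1 : ∀ c : ℕ → ℝ, c 2 = b 2 → (∀ i : ℕ, 3 ≤ i → c i = min (c (i - 1)) (b i) / 2) →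
      ∀ i : ℕ, 2 ≤ i → i ≤ n → ∀ j ∈ N i, ∃ K : ℝ, 0 < K ∧
        ∀ t : ℝ, 0 ≤ t → euclNorm (xt i j t) ≤ K * Real.exp (-(c i) * t) := by
    intro c hc2 hcrec
    have hcpos : ∀ i, 2 ≤ i → 0 < c i := by
      intro i hi
      induction i, hi using Nat.le_induction with
      | base => rw [hc2]; exact hb 2
      | succ i hi ih =>
        rw [hcrec (i + 1) (by omega)]
        have h1 : i + 1 - 1 = i := by omega
        rw [h1]
        exact div_pos (lt_min ih (hb (i + 1))) two_pos
    have hstep : ∀ i, 2 ≤ i → c (i + 1) ≤ c i := by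
      intro i hi
      rw [hcrec (i + 1) (by omega)]
      have h1 : i + 1 - 1 = i := by omega
      rw [h1]
      have h2 : min (c i) (b (i + 1)) ≤ c i := min_le_left _ _
      have h3 : 0 < min (c i) (b (i + 1)) := lt_min (hcpos i hi) (hb (i + 1))
      linarith
    have hcmono : ∀ k i, 2 ≤ k → k ≤ i → c i ≤ c k := by
      intro k i hk hki
      induction i, hki using Nat.le_induction with
      | base => exact le_rfl
      | succ i hki ih => exact (hstep i (le_trans hk hki)).trans ih
    intro i
    induction i using Nat.strong_induction_on with
    | _ i IH =>
      intro hi2 hin j hj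
      obtain ⟨L, hL⟩ := hLip i hi2 hin
      -- the forcing term
      set F : ℝ → (Fin 3 ⊕ Fin 3 → ℝ) :=
        fun t => ∑ k ∈ Finset.Ico 2 i, ∑ m ∈ N k, (B i j k m t) *ᵥ (xt k m t) with hFdef
      have hxF : ∀ t : ℝ, 0 ≤ t → HasDerivAt (xt i j) (-(A i t *ᵥ xt i j t) + F t) t :=
        fun t ht => hode i hi2 hin j hj t ht
      by_cases hi3 : 3 ≤ i
      · -- inductive case
        have hIH' : ∀ k m : ℕ, ∃ K : ℝ, 0 < K ∧
            ((2 ≤ k ∧ k < i ∧ m ∈ N k) → ∀ t, 0 ≤ t →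
              euclNorm (xt k m t) ≤ K * Real.exp (-(c k) * t)) := by
          intro k m
          by_cases h : 2 ≤ k ∧ k < i ∧ m ∈ N k
          · obtain ⟨K, hK0, hK⟩ := IH k h.2.1 h.1 (le_trans (le_of_lt h.2.1) hin) m h.2.2
            exact ⟨K, hK0, fun _ => hK⟩
          · exact ⟨1, one_pos, fun hcon => absurd hcon h⟩
        choose K hKpos hK using hIH'
        set c'' : ℝ := min (c (i - 1)) (b i) with hc''
        have hc''pos : 0 < c'' := lt_min (hcpos (i - 1) (by omega)) (hb i)
        have hci : c i = c'' / 2 := hcrec i hi3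
        set Mf : ℝ := ∑ k ∈ Finset.Ico 2 i, ∑ m ∈ N k, MB * K k m with hMf
        have hMfnn : 0 ≤ Mf := by
          refine Finset.sum_nonneg fun k _ => Finset.sum_nonneg fun m _ => ?_
          exact mul_nonneg hMB0 (hKpos k m).le
        have hFbound : ∀ σ : ℝ, 0 ≤ σ → euclNorm (F σ) ≤ Mf * Real.exp (-c'' * σ) := by
          intro σ hσ
          have h1 : euclNorm (F σ) ≤
              ∑ k ∈ Finset.Ico 2 i, ∑ m ∈ N k, euclNorm ((B i j k m σ) *ᵥ (xt k m σ)) := by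
            refine (eucl_sum_le _ _).trans (Finset.sum_le_sum fun k _ => eucl_sum_le _ _)
          refine h1.trans ?_
          rw [hMf, Finset.sum_mul]
          refine Finset.sum_le_sum fun k hk => ?_
          rw [Finset.sum_mul]
          refine Finset.sum_le_sum fun m hm => ?_
          obtain ⟨hk2, hki⟩ := Finset.mem_Ico.1 hk
          have h2 : euclNorm ((B i j k m σ) *ᵥ (xt k m σ)) ≤ MB * euclNorm (xt k m σ) :=
            hMB i j k m σ hσ _
          have h3 : euclNorm (xt k m σ) ≤ K k m * Real.exp (-(c k) * σ) :=
            hK k m ⟨hk2, hki, hm⟩ σ hσ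
          have h4 : Real.exp (-(c k) * σ) ≤ Real.exp (-c'' * σ) := by
            rw [Real.exp_le_exp]
            have h5 : c'' ≤ c k := by
              refine (min_le_left _ _).trans (hcmono k (i-1) hk2 (by omega))
            nlinarith
          calc euclNorm ((B i j k m σ) *ᵥ (xt k m σ)) ≤ MB * euclNorm (xt k m σ) := h2
            _ ≤ MB * (K k m * Real.exp (-(c k) * σ)) :=
                mul_le_mul_of_nonneg_left ((h3.trans (by nlinarith [Real.exp_pos (-(c k) * σ),
                  (hKpos k m)]))) hMB0
            _ ≤ MB * (K k m * Real.exp (-c'' * σ)) := by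
                refine mul_le_mul_of_nonneg_left ?_ hMB0
                exact mul_le_mul_of_nonneg_left h4 (hKpos k m).le
            _ = MB * K k m * Real.exp (-c'' * σ) := by ring
        refine decay (A i) (Φ i) (hΦ0 i) (fun s t z => hΦ i s t z) L hL (kΦ i) (b i)
          (hb i) (hkΦ i).le (fun s t hs hst z => hΦdecay i hi2 hin s t hs hst z)
          (xt i j) F hxF Mf c'' (c i) hMfnn hFbound (hcpos i hi2) ?_ ?_
        · rw [hci]
          have := min_le_right (c (i-1)) (b i)
          rw [hc''] at *
          linarith
        · rw [hci]; linarith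
      · -- base case i = 2
        have hieq : i = 2 := by omega
        have hF0 : ∀ σ : ℝ, F σ = 0 := by
          intro σ
          rw [hFdef, hieq]
          simp
        have hFbound : ∀ σ : ℝ, 0 ≤ σ → euclNorm (F σ) ≤ 0 * Real.exp (-(c i + 1) * σ) := by
          intro σ _
          rw [hF0 σ, euclNorm_zero, zero_mul]
        have hcib : c i = b i := by rw [hieq, hc2]
        refine decay (A i) (Φ i) (hΦ0 i) (fun s t z => hΦ i s t z) L hL (kΦ i) (b i)
          (hb i) (hkΦ i).le (fun s t hs hst z => hΦdecay i hi2 hin s t hs hst z)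
          (xt i j) F hxF 0 (c i + 1) (c i) le_rfl hFbound (hcpos i hi2) hcib.le
          (by linarith)
  refine ⟨part1, ?_⟩
  -- Part 2
  intro bc hbc i hi3 hin j hj
  have hbc2 : b 2 = bc := hbc 2 le_rfl hn
  have hbcpos : 0 < bc := by rw [← hbc2]; exact hb 2
  have hclosed : ∀ i, 2 ≤ i → i ≤ n → cfun b i = bc / 2 ^ (i - 2) := by
    intro i hi2 hin'
    induction i, hi2 using Nat.le_induction with
    | base => simp [cfun_two, hbc2]
    | succ i hi ih =>
      have hin'' : i ≤ n := by omega
      rw [cfun_rec b (i + 1) (by omega)]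
      have h1 : i + 1 - 1 = i := by omega
      rw [h1, ih hin'', hbc (i + 1) (by omega) hin']
      have h2 : bc / 2 ^ (i - 2) ≤ bc := by
        apply div_le_self hbcpos.le
        exact one_le_pow₀ one_le_two
      rw [min_eq_left h2]
      have h3 : (i + 1) - 2 = (i - 2) + 1 := by omega
      rw [h3, pow_succ, div_div]
  obtain ⟨K, hK0, hK⟩ := part1 (cfun b) (cfun_two b) (cfun_rec b) i (by omega) hin j hj
  rw [hclosed i (by omega) hin] at hK
  exact ⟨K, hK0, hK⟩
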